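/- Let λ ≠ 0 be a real number, let t ∈ ℝ, h₀ > 0, and let y : ℝ → ℝ be three times continuously differentiable on [t−2h₀, t+h₀] with |y'''(s)| ≤ M for all s in this interval. Then for every h with 0 < h ≤ h₀, the local truncation error of the ZeroSNet scheme satisfies |y(t+h) − α₀(λ)·y(t) − α₁(λ)·y(t−h) − α₂(λ)·y(t−2h) − h·β(λ)·y'(t)| ≤ ((1 + |α₁(λ)| + 8·|α₂(λ)|)/6)·M·h³; i.e., the ZeroSNet discretization has local truncation error of order h³. -/

import Mathlib

/-- ZeroSNet coefficient α₀(λ) = 3(1+λ)/(4λ). -/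
noncomputable def zerosAlpha0 (l : ℝ) : ℝ := 3 * (1 + l) / (4 * l)

/-- ZeroSNet coefficient α₁(λ) = −1/λ. -/
noncomputable def zerosAlpha1 (l : ℝ) : ℝ := -1 / l

/-- ZeroSNet coefficient α₂(λ) = (1+λ)/(4λ). -/
noncomputable def zerosAlpha2 (l : ℝ) : ℝ := (1 + l) / (4 * l)

/-- ZeroSNet coefficient β(λ) = (3λ−1)/(2λ). -/
noncomputable def zerosBeta (l : ℝ) : ℝ := (3 * l - 1) / (2 * l)

open Set Nat


open Set Nat

lemma iterDeriv_subset {f : ℝ → ℝ} {a b c d : ℝ} (hcd : c < d)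
    (hsub : Set.Icc c d ⊆ Set.Icc a b) (hab : a < b)
    (hf : ContDiffOn ℝ 3 f (Set.Icc a b)) {n : ℕ} (hn : (n : ℕ∞) ≤ 3) {x : ℝ}
    (hx : x ∈ Set.Icc c d) :
    iteratedDerivWithin n f (Set.Icc c d) x = iteratedDerivWithin n f (Set.Icc a b) x := by
  have H := ((hf.ftaylorSeriesWithin (uniqueDiffOn_Icc hab)).mono
      hsub).eq_iteratedFDerivWithin_of_uniqueDiffOn (by exact_mod_cast hn)
      (uniqueDiffOn_Icc hcd) hx
  simp only [iteratedDerivWithin_eq_iteratedFDerivWithin, ← H, ftaylorSeriesWithin]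

lemma taylor_lagrange_backward {f : ℝ → ℝ} {x x₀ : ℝ} {n : ℕ} (hx : x < x₀)
    (hf : ContDiffOn ℝ n f (Set.Icc x x₀))
    (hf' : DifferentiableOn ℝ (iteratedDerivWithin n f (Set.Icc x x₀)) (Set.Ioo x x₀)) :
    ∃ x' ∈ Set.Ioo x x₀, f x - taylorWithinEval f n (Set.Icc x x₀) x₀ x =
      iteratedDerivWithin (n + 1) f (Set.Icc x x₀) x' * (x - x₀) ^ (n + 1) / (n + 1)! := by
  rcases exists_ratio_hasDerivAt_eq_ratio_slope
      (fun t => taylorWithinEval f n (Set.Icc x x₀) t x)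
      (fun t => ((n ! : ℝ)⁻¹ * (x - t) ^ n) • iteratedDerivWithin (n + 1) f (Set.Icc x x₀) t)
      hx (continuousOn_taylorWithinEval (uniqueDiffOn_Icc hx) hf)
      (fun y hy => taylorWithinEval_hasDerivAt_Ioo x hx hy hf hf')
      (fun t => (x - t) ^ (n + 1)) (fun t => -(↑n + 1) * (x - t) ^ n)
      (by fun_prop)
      (fun y _ => monomial_has_deriv_aux y x _) with ⟨y, hy, h⟩
  refine ⟨y, hy, ?_⟩
  simp only [taylorWithinEval_self, smul_eq_mul, sub_self, zero_pow (Nat.succ_ne_zero n)] at h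
  have hxy : (x - y) ^ n ≠ 0 := pow_ne_zero _ (sub_ne_zero.2 hy.1.ne)
  have hk : (n ! : ℝ) ≠ 0 := Nat.cast_ne_zero.2 n.factorial_ne_zero
  have hfac : ((n + 1)! : ℝ) = ((n : ℝ) + 1) * (n ! : ℝ) := by
    push_cast [Nat.factorial_succ]; ring
  rw [hfac, eq_div_iff (by positivity)]
  apply mul_right_cancel₀ hxy
  field_simp at h
  linear_combination (-(x - y) ^ n) * h

lemma taylor3_two_sided {f : ℝ → ℝ} {a b M : ℝ} (hab : a < b)
    (hf : ContDiffOn ℝ 3 f (Set.Icc a b))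
    (hM : ∀ s ∈ Set.Icc a b, |iteratedDerivWithin 3 f (Set.Icc a b) s| ≤ M)
    {t x : ℝ} (ht : t ∈ Set.Icc a b) (hx : x ∈ Set.Icc a b) :
    |f x - f t - (x - t) * derivWithin f (Set.Icc a b) t
        - (x - t) ^ 2 / 2 * iteratedDerivWithin 2 f (Set.Icc a b) t|
      ≤ M * |x - t| ^ 3 / 6 := by
  rcases lt_trichotomy t x with hlt | rfl | hlt
  · -- forward
    have sub : Set.Icc t x ⊆ Set.Icc a b := Icc_subset_Icc ht.1 hx.2
    have hf2 : ContDiffOn ℝ 2 f (Set.Icc t x) := (hf.mono sub).of_le (by norm_cast)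
    have hd : DifferentiableOn ℝ (iteratedDerivWithin 2 f (Set.Icc t x)) (Set.Ioo t x) :=
      ((hf.mono sub).differentiableOn_iteratedDerivWithin (by norm_cast)
        (uniqueDiffOn_Icc hlt)).mono Ioo_subset_Icc_self
    have hR0 := taylor_mean_remainder_lagrange (n := 2) (x := x) (x₀ := t) hlt.ne
      (by rwa [uIcc_of_le hlt.le]) (by rwa [uIcc_of_le hlt.le, uIoo_of_le hlt.le])
    rw [uIcc_of_le hlt.le, uIoo_of_le hlt.le] at hR0
    obtain ⟨ξ, hξ, hR⟩ := hR0
    have e1 : iteratedDerivWithin 1 f (Set.Icc t x) t = derivWithin f (Set.Icc a b) t := by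
      rw [iterDeriv_subset hlt sub hab hf (by norm_num) (left_mem_Icc.2 hlt.le),
        iteratedDerivWithin_one]
    have e2 : iteratedDerivWithin 2 f (Set.Icc t x) t = iteratedDerivWithin 2 f (Set.Icc a b) t :=
      iterDeriv_subset hlt sub hab hf (by norm_num) (left_mem_Icc.2 hlt.le)
    have e3 : iteratedDerivWithin 3 f (Set.Icc t x) ξ = iteratedDerivWithin 3 f (Set.Icc a b) ξ :=
      iterDeriv_subset hlt sub hab hf (by norm_num) (Ioo_subset_Icc_self hξ)
    have key : f x - f t - (x - t) * derivWithin f (Set.Icc a b) t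
        - (x - t) ^ 2 / 2 * iteratedDerivWithin 2 f (Set.Icc a b) t
        = iteratedDerivWithin 3 f (Set.Icc a b) ξ * (x - t) ^ 3 / 6 := by
      rw [taylor_within_apply] at hR
      simp only [Finset.sum_range_succ, Finset.sum_range_zero, smul_eq_mul,
        iteratedDerivWithin_zero, e1, e2, e3] at hR
      norm_num [Nat.factorial] at hR
      linarith [hR]
    rw [key]
    calc |iteratedDerivWithin 3 f (Set.Icc a b) ξ * (x - t) ^ 3 / 6|
        = |iteratedDerivWithin 3 f (Set.Icc a b) ξ| * |x - t| ^ 3 / 6 := by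
          rw [abs_div, abs_mul, abs_pow]; norm_num
      _ ≤ M * |x - t| ^ 3 / 6 := by
          gcongr
          exact hM ξ (sub (Ioo_subset_Icc_self hξ))
  · simp
  · -- backward
    have sub : Set.Icc x t ⊆ Set.Icc a b := Icc_subset_Icc hx.1 ht.2
    have hf2 : ContDiffOn ℝ 2 f (Set.Icc x t) := (hf.mono sub).of_le (by norm_cast)
    have hd : DifferentiableOn ℝ (iteratedDerivWithin 2 f (Set.Icc x t)) (Set.Ioo x t) :=
      ((hf.mono sub).differentiableOn_iteratedDerivWithin (by norm_cast)
        (uniqueDiffOn_Icc hlt)).mono Ioo_subset_Icc_self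
    obtain ⟨ξ, hξ, hR⟩ := taylor_lagrange_backward (n := 2) hlt hf2 hd
    have e1 : iteratedDerivWithin 1 f (Set.Icc x t) t = derivWithin f (Set.Icc a b) t := by
      rw [iterDeriv_subset hlt sub hab hf (by norm_num) (right_mem_Icc.2 hlt.le),
        iteratedDerivWithin_one]
    have e2 : iteratedDerivWithin 2 f (Set.Icc x t) t = iteratedDerivWithin 2 f (Set.Icc a b) t :=
      iterDeriv_subset hlt sub hab hf (by norm_num) (right_mem_Icc.2 hlt.le)
    have e3 : iteratedDerivWithin 3 f (Set.Icc x t) ξ = iteratedDerivWithin 3 f (Set.Icc a b) ξ :=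
      iterDeriv_subset hlt sub hab hf (by norm_num) (Ioo_subset_Icc_self hξ)
    have key : f x - f t - (x - t) * derivWithin f (Set.Icc a b) t
        - (x - t) ^ 2 / 2 * iteratedDerivWithin 2 f (Set.Icc a b) t
        = iteratedDerivWithin 3 f (Set.Icc a b) ξ * (x - t) ^ 3 / 6 := by
      rw [taylor_within_apply] at hR
      simp only [Finset.sum_range_succ, Finset.sum_range_zero, smul_eq_mul,
        iteratedDerivWithin_zero, e1, e2, e3] at hR
      norm_num [Nat.factorial] at hR
      linarith [hR]
    rw [key]
    calc |iteratedDerivWithin 3 f (Set.Icc a b) ξ * (x - t) ^ 3 / 6|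
        = |iteratedDerivWithin 3 f (Set.Icc a b) ξ| * |x - t| ^ 3 / 6 := by
          rw [abs_div, abs_mul, abs_pow]; norm_num
      _ ≤ M * |x - t| ^ 3 / 6 := by
          gcongr
          exact hM ξ (sub (Ioo_subset_Icc_self hξ))


/-- Local truncation error of the ZeroSNet scheme is of order `h³`: if `y` is three times
continuously differentiable on `[t−2h₀, t+h₀]` with third derivative bounded by `M` there,
then for `0 < h ≤ h₀`,
`|y(t+h) − α₀(λ)·y(t) − α₁(λ)·y(t−h) − α₂(λ)·y(t−2h) − h·β(λ)·y'(t)|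
  ≤ ((1 + |α₁(λ)| + 8·|α₂(λ)|)/6)·M·h³`. -/
theorem zerosnet_truncation_error (l : ℝ) (hl : l ≠ 0) (t h₀ M : ℝ) (hh₀ : 0 < h₀)
    (y : ℝ → ℝ)
    (hy : ContDiffOn ℝ 3 y (Set.Icc (t - 2 * h₀) (t + h₀)))
    (hM : ∀ s ∈ Set.Icc (t - 2 * h₀) (t + h₀),
      |iteratedDerivWithin 3 y (Set.Icc (t - 2 * h₀) (t + h₀)) s| ≤ M) :
    ∀ h : ℝ, 0 < h → h ≤ h₀ →
      |y (t + h) - zerosAlpha0 l * y t - zerosAlpha1 l * y (t - h)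
          - zerosAlpha2 l * y (t - 2 * h)
          - h * zerosBeta l * derivWithin y (Set.Icc (t - 2 * h₀) (t + h₀)) t|
        ≤ (1 + |zerosAlpha1 l| + 8 * |zerosAlpha2 l|) / 6 * M * h ^ 3 := by
  intro h hpos hle
  have hab : t - 2 * h₀ < t + h₀ := by linarith
  have ht : t ∈ Set.Icc (t - 2 * h₀) (t + h₀) := ⟨by linarith, by linarith⟩
  have hxp : t + h ∈ Set.Icc (t - 2 * h₀) (t + h₀) := ⟨by linarith, by linarith⟩
  have hxm : t - h ∈ Set.Icc (t - 2 * h₀) (t + h₀) := ⟨by linarith, by linarith⟩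
  have hxm2 : t - 2 * h ∈ Set.Icc (t - 2 * h₀) (t + h₀) := ⟨by linarith, by linarith⟩
  set d1 := derivWithin y (Set.Icc (t - 2 * h₀) (t + h₀)) t with hd1
  set d2 := iteratedDerivWithin 2 y (Set.Icc (t - 2 * h₀) (t + h₀)) t with hd2
  have hM0 : 0 ≤ M := le_trans (abs_nonneg _) (hM t ht)
  have B1 : |y (t + h) - y t - h * d1 - h ^ 2 / 2 * d2| ≤ M * h ^ 3 / 6 := by
    have := taylor3_two_sided hab hy hM ht hxp
    rw [show t + h - t = h by ring] at this
    rwa [abs_of_pos hpos] at this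
  have B2 : |y (t - h) - y t + h * d1 - h ^ 2 / 2 * d2| ≤ M * h ^ 3 / 6 := by
    have hB := taylor3_two_sided hab hy hM ht hxm
    rw [show t - h - t = -h by ring, abs_neg, abs_of_pos hpos] at hB
    calc |y (t - h) - y t + h * d1 - h ^ 2 / 2 * d2|
        = |y (t - h) - y t - (-h) * d1 - (-h) ^ 2 / 2 * d2| := by ring_nf
      _ ≤ M * h ^ 3 / 6 := hB
  have B3 : |y (t - 2 * h) - y t + 2 * h * d1 - 2 * h ^ 2 * d2| ≤ M * (8 * h ^ 3) / 6 := by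
    have hB := taylor3_two_sided hab hy hM ht hxm2
    rw [show t - 2 * h - t = -(2 * h) by ring, abs_neg, abs_of_pos (show (0:ℝ) < 2 * h by linarith)] at hB
    calc |y (t - 2 * h) - y t + 2 * h * d1 - 2 * h ^ 2 * d2|
        = |y (t - 2 * h) - y t - (-(2 * h)) * d1 - (-(2 * h)) ^ 2 / 2 * d2| := by ring_nf
      _ ≤ M * (2 * h) ^ 3 / 6 := hB
      _ = M * (8 * h ^ 3) / 6 := by ring
  have key : y (t + h) - zerosAlpha0 l * y t - zerosAlpha1 l * y (t - h)
      - zerosAlpha2 l * y (t - 2 * h) - h * zerosBeta l * d1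
      = (y (t + h) - y t - h * d1 - h ^ 2 / 2 * d2)
        - zerosAlpha1 l * (y (t - h) - y t + h * d1 - h ^ 2 / 2 * d2)
        - zerosAlpha2 l * (y (t - 2 * h) - y t + 2 * h * d1 - 2 * h ^ 2 * d2) := by
    simp only [zerosAlpha0, zerosAlpha1, zerosAlpha2, zerosBeta]
    field_simp
    ring
  rw [key]
  calc |(y (t + h) - y t - h * d1 - h ^ 2 / 2 * d2)
        - zerosAlpha1 l * (y (t - h) - y t + h * d1 - h ^ 2 / 2 * d2)
        - zerosAlpha2 l * (y (t - 2 * h) - y t + 2 * h * d1 - 2 * h ^ 2 * d2)|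
      ≤ |y (t + h) - y t - h * d1 - h ^ 2 / 2 * d2|
        + |zerosAlpha1 l| * |y (t - h) - y t + h * d1 - h ^ 2 / 2 * d2|
        + |zerosAlpha2 l| * |y (t - 2 * h) - y t + 2 * h * d1 - 2 * h ^ 2 * d2| := by
        refine (abs_sub _ _).trans ?_
        rw [abs_mul]
        gcongr
        refine (abs_sub _ _).trans ?_
        rw [abs_mul]
    _ ≤ M * h ^ 3 / 6 + |zerosAlpha1 l| * (M * h ^ 3 / 6)
        + |zerosAlpha2 l| * (M * (8 * h ^ 3) / 6) := by gcongr
    _ = (1 + |zerosAlpha1 l| + 8 * |zerosAlpha2 l|) / 6 * M * h ^ 3 := by ring
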